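/- Let A be a commutative ℚ-algebra, Se a symmetrel mould on all words over ℕ* with values in A, and for θ₁, θ₂ ∈ A let Se_{θ₁} and Se_{θ₂} denote the unique symmetrel extensions agreeing with Se on words with first letter ≥ 2 and taking values θ₁ and θ₂ respectively on the word (1). Then Se_{θ₁} = Ne_{θ₁-θ₂} × Se_{θ₂}, i.e., Se_{θ₁}^w = Σ_{w = u·v} Ne_{θ₁-θ₂}^u · Se_{θ₂}^v for every word w, where Ne_γ^{(1^{[r]})} = γ^r/r! and Ne_γ vanishes on all other nonempty words. -/

import Mathlib

/-- The stuffle (quasi-shuffle) product of two words over `ℕ+`, as a multiset of words. -/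
def stuffle : List ℕ+ → List ℕ+ → Multiset (List ℕ+)
  | [], q => {q}
  | p :: ps, [] => {p :: ps}
  | a :: p, b :: q =>
      (stuffle p (b :: q)).map (a :: ·) + (stuffle (a :: p) q).map (b :: ·) +
        (stuffle p q).map ((a + b) :: ·)
termination_by p q => p.length + q.length

/-- A word is admissible if its first letter (if any) is at least 2. -/
def Adm (l : List ℕ+) : Prop := ∀ a ∈ l.head?, 2 ≤ a

open scoped Classical in
/-- The mould `Ne_γ`: `γ^r/r!` on the word `(1,…,1)` of length `r`, `0` elsewhere. -/
noncomputable def NeMould {A : Type*} [CommRing A] [Algebra ℚ A] (γ : A) (l : List ℕ+) : A :=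
  if ∀ x ∈ l, x = 1 then ((l.length.factorial : ℚ))⁻¹ • γ ^ l.length else 0

theorem stuffle_nil_left (q : List ℕ+) : stuffle [] q = {q} := by
  cases q <;> simp [stuffle]

theorem stuffle_nil_right (p : List ℕ+) : stuffle p [] = {p} := by
  cases p <;> simp [stuffle]

theorem stuffle_cons (a b : ℕ+) (p q : List ℕ+) :
    stuffle (a :: p) (b :: q) =
      (stuffle p (b :: q)).map (a :: ·) + (stuffle (a :: p) q).map (b :: ·) +
        (stuffle p q).map ((a + b) :: ·) := by
  simp [stuffle]

theorem one_add_ne_one (b : ℕ+) : (1:ℕ+) + b ≠ 1 := by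
  intro h
  have h2 : ((1 + b : ℕ+) : ℕ) = ((1:ℕ+) : ℕ) := congrArg _ h
  have := b.pos
  push_cast at h2
  omega

def leadOnes : List ℕ+ → ℕ
  | [] => 0
  | a :: l => if a = 1 then leadOnes l + 1 else 0

theorem leadOnes_cons (a : ℕ+) (l : List ℕ+) :
    leadOnes (a :: l) = if a = 1 then leadOnes l + 1 else 0 := rfl

theorem stuffle_one (b : ℕ+) (q : List ℕ+) :
    stuffle [1] (b :: q) =
      (1 :: b :: q) ::ₘ ((stuffle [1] q).map (b :: ·) + {(1 + b) :: q}) := by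
  rw [stuffle_cons, stuffle_nil_left, stuffle_nil_left]
  simp only [Multiset.map_singleton]
  rw [add_assoc, Multiset.singleton_add]

theorem stuffle_one_leadOnes : ∀ u : List ℕ+, ∀ x ∈ stuffle [1] u,
    x = 1 :: u ∨ leadOnes x ≤ leadOnes u := by
  intro u
  induction u with
  | nil => intro x hx; rw [stuffle_nil_right] at hx; left; simpa using hx
  | cons b q ih =>
    intro x hx
    rw [stuffle_one] at hx
    rcases Multiset.mem_cons.mp hx with rfl | hx
    · left; rfl
    rcases Multiset.mem_add.mp hx with hx | hx
    · obtain ⟨y, hy, rfl⟩ := Multiset.mem_map.mp hx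
      by_cases hb : b = 1
      · subst hb
        rcases ih y hy with rfl | h
        · left; rfl
        · right
          rw [leadOnes_cons, leadOnes_cons, if_pos rfl, if_pos rfl]
          omega
      · right; rw [leadOnes_cons, if_neg hb]; omega
    · right
      have hx' : x = (1 + b) :: q := by simpa using hx
      subst hx'
      rw [leadOnes_cons, if_neg (one_add_ne_one b)]
      omega

theorem count_stuffle_one : ∀ u : List ℕ+, (stuffle [1] u).count (1 :: u) = leadOnes u + 1 := by
  intro u
  induction u with
  | nil => rw [stuffle_nil_right]; simp [leadOnes]
  | cons b q ih =>
    rw [stuffle_one, Multiset.count_cons_self, leadOnes_cons]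
    congr 1
    rw [Multiset.count_add]
    have h2 : (1:ℕ+) :: b :: q ≠ ((1:ℕ+) + b) :: q := by
      intro h
      exact one_add_ne_one b (List.head_eq_of_cons_eq h).symm
    rw [Multiset.count_singleton, if_neg h2]
    by_cases hb : b = 1
    · subst hb
      have hcnt : Multiset.count ((1:ℕ+) :: 1 :: q) ((stuffle [1] q).map (fun x => (1:ℕ+) :: x))
          = Multiset.count ((1:ℕ+) :: q) (stuffle [1] q) := by
        rw [Multiset.count_map, Multiset.count, Multiset.countP_eq_card_filter]
        congr 1
        apply Multiset.filter_congr
        intro x _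
        constructor
        · intro h; injection h
        · intro h; rw [h]
      rw [hcnt, ih]
      simp [if_pos rfl]
    · have hcnt : Multiset.count ((1:ℕ+) :: b :: q) ((stuffle [1] q).map (fun x => b :: x)) = 0 := by
        rw [Multiset.count_eq_zero]
        intro h
        obtain ⟨y, _, hy⟩ := Multiset.mem_map.mp h
        exact hb (List.head_eq_of_cons_eq hy)
      rw [hcnt, if_neg hb]

theorem stuffle_allOnes : ∀ p q : List ℕ+, ∀ x ∈ stuffle p q,
    (∀ l ∈ x, l = 1) → (∀ l ∈ p, l = 1) ∧ (∀ l ∈ q, l = 1) ∧ x.length = p.length + q.length := by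
  intro p q
  induction p, q using stuffle.induct with
  | case1 q => simp [stuffle_nil_left]
  | case2 a p => simp [stuffle_nil_right]
  | case3 a p b q ih1 ih2 ih3 =>
    intro x hx hones
    rw [stuffle_cons] at hx
    simp only [Multiset.mem_add, Multiset.mem_map] at hx
    rcases hx with (⟨y, hy, rfl⟩ | ⟨y, hy, rfl⟩) | ⟨y, hy, rfl⟩
    · have h1 : a = 1 := hones a (by simp)
      obtain ⟨hp, hq, hlen⟩ := ih1 y hy (fun l hl => hones l (by simp [hl]))
      refine ⟨?_, hq, ?_⟩
      · intro l hl
        rcases List.mem_cons.mp hl with rfl | hl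
        · exact h1
        · exact hp l hl
      · simp only [List.length_cons] at hlen ⊢; omega
    · have h1 : b = 1 := hones b (by simp)
      obtain ⟨hp, hq, hlen⟩ := ih2 y hy (fun l hl => hones l (by simp [hl]))
      refine ⟨hp, ?_, ?_⟩
      · intro l hl
        rcases List.mem_cons.mp hl with rfl | hl
        · exact h1
        · exact hq l hl
      · simp only [List.length_cons] at hlen ⊢; omega
    · exfalso
      have h1 : a + b = 1 := hones (a+b) (by simp)
      have h2 : ((a+b : ℕ+) : ℕ) = 1 := by rw [h1]; rfl
      have := a.pos; have := b.pos
      rw [PNat.add_coe] at h2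
      omega

open scoped Classical

theorem Ne_allOnes {A : Type*} [CommRing A] [Algebra ℚ A] (γ : A) {l : List ℕ+}
    (h : ∀ x ∈ l, x = 1) :
    NeMould γ l = ((l.length.factorial : ℚ))⁻¹ • γ ^ l.length := by
  rw [NeMould, if_pos h]

theorem Ne_not_allOnes {A : Type*} [CommRing A] [Algebra ℚ A] (γ : A) {l : List ℕ+}
    (h : ¬ ∀ x ∈ l, x = 1) : NeMould γ l = 0 := by
  rw [NeMould, if_neg h]

theorem two_ne_one : ((1:ℕ+) + 1) ≠ 1 := by decide

theorem countP_choose : ∀ m n : ℕ,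
    (stuffle (List.replicate m 1) (List.replicate n 1)).countP (fun x => ∀ l ∈ x, l = 1)
      = (m+n).choose m := by
  have keymap : ∀ (c : ℕ+) (s : Multiset (List ℕ+)),
      (s.map (c :: ·)).countP (fun x => ∀ l ∈ x, l = 1)
        = if c = 1 then s.countP (fun x => ∀ l ∈ x, l = 1) else 0 := by
    intro c s
    rw [Multiset.countP_map]
    split_ifs with hc
    · subst hc
      rw [Multiset.countP_eq_card_filter]
      congr 1
      apply Multiset.filter_congr
      intro x _
      simp
    · rw [Multiset.card_eq_zero, Multiset.filter_eq_nil]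
      intro x _ h
      exact hc (h c (by simp))
  intro m
  induction m with
  | zero =>
    intro n
    rw [List.replicate_zero, stuffle_nil_left]
    have hall : ∀ l ∈ List.replicate n (1:ℕ+), l = 1 := fun l hl => List.eq_of_mem_replicate hl
    rw [← Multiset.cons_zero (List.replicate n 1), Multiset.countP_cons_of_pos _ hall,
      Multiset.countP_zero]
    simp
  | succ m ihm =>
    intro n
    induction n with
    | zero =>
      rw [List.replicate_zero, stuffle_nil_right]
      have hall : ∀ l ∈ List.replicate (m+1) (1:ℕ+), l = 1 := fun l hl => List.eq_of_mem_replicate hl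
      rw [← Multiset.cons_zero (List.replicate (m+1) 1), Multiset.countP_cons_of_pos _ hall,
        Multiset.countP_zero]
      simp
    | succ n ihn =>
      rw [List.replicate_succ, List.replicate_succ (a := 1) (n := n), stuffle_cons]
      rw [Multiset.countP_add, Multiset.countP_add]
      rw [← List.replicate_succ, ← List.replicate_succ]
      rw [keymap, keymap, keymap]
      rw [if_pos rfl, if_pos rfl, if_neg two_ne_one]
      rw [ihm (n+1), ihn]
      have e3 : m + 1 + (n + 1) = (m + n + 1) + 1 := by omega
      rw [e3, Nat.choose_succ_succ]
      have e1 : m + (n+1) = m + n + 1 := by omega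
      have e2 : m + 1 + n = m + n + 1 := by omega
      rw [e1, e2]
      simp only [Nat.succ_eq_add_one]
      omega

theorem Ne_symmetrel_ones {A : Type*} [CommRing A] [Algebra ℚ A] (γ : A) (m n : ℕ) :
    NeMould γ (List.replicate m 1) * NeMould γ (List.replicate n 1)
      = ((stuffle (List.replicate m 1) (List.replicate n 1)).map (NeMould γ)).sum := by
  have hp : ∀ x ∈ List.replicate m (1:ℕ+), x = 1 := fun x hx => List.eq_of_mem_replicate hx
  have hq : ∀ x ∈ List.replicate n (1:ℕ+), x = 1 := fun x hx => List.eq_of_mem_replicate hx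
  set S := stuffle (List.replicate m 1) (List.replicate n 1) with hS
  set c : A := (((m+n).factorial : ℚ))⁻¹ • γ ^ (m+n) with hc
  have key : (S.map (NeMould γ)).sum = ((m+n).choose m) • c := by
    have hsplit := (Multiset.filter_add_not (fun x => ∀ l ∈ x, l = 1) S).symm
    rw [hsplit, Multiset.map_add, Multiset.sum_add]
    have h1 : (S.filter (fun x => ∀ l ∈ x, l = 1)).map (NeMould γ)
        = Multiset.replicate (S.countP (fun x => ∀ l ∈ x, l = 1)) c := by
      rw [Multiset.countP_eq_card_filter, ← Multiset.map_const']
      apply Multiset.map_congr rfl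
      intro x hx
      obtain ⟨hx1, hx2⟩ := Multiset.mem_filter.mp hx
      have hlen := (stuffle_allOnes _ _ x hx1 hx2).2.2
      rw [List.length_replicate, List.length_replicate] at hlen
      rw [Ne_allOnes γ hx2, hlen]
    have h2 : ((S.filter (fun x => ¬ ∀ l ∈ x, l = 1)).map (NeMould γ)).sum = 0 := by
      apply Multiset.sum_eq_zero
      intro a ha
      obtain ⟨x, hx, rfl⟩ := Multiset.mem_map.mp ha
      exact Ne_not_allOnes γ (Multiset.mem_filter.mp hx).2
    rw [h1, h2, Multiset.sum_replicate, add_zero, hS, countP_choose]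
  rw [key, Ne_allOnes γ hp, Ne_allOnes γ hq]
  simp only [List.length_replicate]
  rw [← Nat.cast_smul_eq_nsmul ℚ, hc, smul_smul, smul_mul_smul_comm, ← pow_add]
  congr 1
  have hfact := Nat.choose_mul_factorial_mul_factorial (Nat.le_add_right m n)
  rw [Nat.add_sub_cancel_left] at hfact
  have hQ : ((m+n).factorial : ℚ) = ((m+n).choose m : ℚ) * m.factorial * n.factorial := by
    exact_mod_cast hfact.symm
  have h1 : (m.factorial : ℚ) ≠ 0 := Nat.cast_ne_zero.mpr m.factorial_ne_zero
  have h2 : (n.factorial : ℚ) ≠ 0 := Nat.cast_ne_zero.mpr n.factorial_ne_zero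
  have h3 : ((m+n).factorial : ℚ) ≠ 0 := Nat.cast_ne_zero.mpr (m+n).factorial_ne_zero
  field_simp
  rw [hQ]
  ring

theorem Ne_symmetrel {A : Type*} [CommRing A] [Algebra ℚ A] (γ : A) (p q : List ℕ+) :
    NeMould γ p * NeMould γ q = ((stuffle p q).map (NeMould γ)).sum := by
  by_cases hp : ∀ x ∈ p, x = 1
  · by_cases hq : ∀ x ∈ q, x = 1
    · have hp' : p = List.replicate p.length 1 := List.eq_replicate_length.mpr hp
      have hq' : q = List.replicate q.length 1 := List.eq_replicate_length.mpr hq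
      rw [hp', hq']
      exact Ne_symmetrel_ones γ p.length q.length
    · rw [Ne_not_allOnes γ hq, mul_zero]
      symm
      apply Multiset.sum_eq_zero
      intro a ha
      obtain ⟨x, hx, rfl⟩ := Multiset.mem_map.mp ha
      apply Ne_not_allOnes
      intro hall
      exact hq (stuffle_allOnes p q x hx hall).2.1
  · rw [Ne_not_allOnes γ hp, zero_mul]
    symm
    apply Multiset.sum_eq_zero
    intro a ha
    obtain ⟨x, hx, rfl⟩ := Multiset.mem_map.mp ha
    apply Ne_not_allOnes
    intro hall
    exact hp (stuffle_allOnes p q x hx hall).1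

theorem split_stuffle {A : Type*} [CommRing A] :
    ∀ (p q : List ℕ+), ∀ (f g : List ℕ+ → A),
    ((stuffle p q).map
        (fun w => ∑ k ∈ Finset.range (w.length + 1), f (w.take k) * g (w.drop k))).sum
      = ∑ i ∈ Finset.range (p.length + 1), ∑ j ∈ Finset.range (q.length + 1),
          ((stuffle (List.take i p) (List.take j q)).map f).sum *
            ((stuffle (List.drop i p) (List.drop j q)).map g).sum := by
  intro p q
  induction p, q using stuffle.induct with
  | case1 q =>
    intro f g
    rw [stuffle_nil_left]
    simp only [List.length_nil, zero_add, Finset.sum_range_one, List.take_nil, List.drop_nil,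
      stuffle_nil_left, Multiset.map_singleton, Multiset.sum_singleton]
  | case2 a p =>
    intro f g
    rw [stuffle_nil_right]
    simp only [List.length_nil, zero_add, Finset.sum_range_one, List.take_nil, List.drop_nil,
      stuffle_nil_right, Multiset.map_singleton, Multiset.sum_singleton]
  | case3 a p b q ih1 ih2 ih3 =>
    intro f g
    have point : ∀ (c : ℕ+) (x : List ℕ+),
        (∑ k ∈ Finset.range ((c :: x).length + 1), f ((c :: x).take k) * g ((c :: x).drop k))
          = f [] * g (c :: x)
            + ∑ k ∈ Finset.range (x.length + 1), f (c :: x.take k) * g (x.drop k) := by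
      intro c x
      simp only [List.length_cons]
      rw [Finset.sum_range_succ']
      simp only [List.take_succ_cons, List.drop_succ_cons, List.take_zero, List.drop_zero]
      rw [add_comm]
    have expand : ∀ (c : ℕ+) (s : Multiset (List ℕ+)),
        ((s.map (c :: ·)).map
            (fun w => ∑ k ∈ Finset.range (w.length + 1), f (w.take k) * g (w.drop k))).sum
          = f [] * ((s.map (fun x => g (c :: x))).sum)
            + (s.map (fun x => ∑ k ∈ Finset.range (x.length + 1),
                f (c :: x.take k) * g (x.drop k))).sum := by
      intro c s
      rw [Multiset.map_map]
      have h1 : ((fun w => ∑ k ∈ Finset.range (w.length + 1), f (w.take k) * g (w.drop k))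
            ∘ (c :: ·)) = fun x => f [] * g (c :: x)
            + ∑ k ∈ Finset.range (x.length + 1), f (c :: x.take k) * g (x.drop k) := by
        funext x
        exact point c x
      rw [h1, Multiset.sum_map_add, Multiset.sum_map_mul_left]
    rw [stuffle_cons, Multiset.map_add, Multiset.map_add, Multiset.sum_add, Multiset.sum_add]
    rw [expand a, expand b, expand (a+b)]
    rw [ih1 (fun t => f (a :: t)) g, ih2 (fun t => f (b :: t)) g, ih3 (fun t => f ((a+b) :: t)) g]
    have hS1 : (∑ i ∈ Finset.range (p.length + 1),
            ∑ j ∈ Finset.range ((b :: q).length + 1),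
              (Multiset.map (fun t => f (a :: t)) (stuffle (List.take i p) (List.take j (b :: q)))).sum *
                (Multiset.map g (stuffle (List.drop i p) (List.drop j (b :: q)))).sum)
        = (∑ i ∈ Finset.range (p.length + 1), ∑ j ∈ Finset.range (q.length + 1),
              (Multiset.map (fun t => f (a :: t)) (stuffle (List.take i p) (b :: List.take j q))).sum *
                (Multiset.map g (stuffle (List.drop i p) (List.drop j q))).sum)
          + ∑ i ∈ Finset.range (p.length + 1),
              f (a :: List.take i p) * (Multiset.map g (stuffle (List.drop i p) (b :: q))).sum := by
      rw [← Finset.sum_add_distrib]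
      apply Finset.sum_congr rfl
      intro i _
      simp only [List.length_cons]
      rw [Finset.sum_range_succ']
      simp only [List.take_succ_cons, List.drop_succ_cons, List.take_zero, List.drop_zero,
        stuffle_nil_right, Multiset.map_singleton, Multiset.sum_singleton]
    have hS2 : (∑ i ∈ Finset.range ((a :: p).length + 1),
            ∑ j ∈ Finset.range (q.length + 1),
              (Multiset.map (fun t => f (b :: t)) (stuffle (List.take i (a :: p)) (List.take j q))).sum *
                (Multiset.map g (stuffle (List.drop i (a :: p)) (List.drop j q))).sum)
        = (∑ i ∈ Finset.range (p.length + 1), ∑ j ∈ Finset.range (q.length + 1),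
              (Multiset.map (fun t => f (b :: t)) (stuffle (a :: List.take i p) (List.take j q))).sum *
                (Multiset.map g (stuffle (List.drop i p) (List.drop j q))).sum)
          + ∑ j ∈ Finset.range (q.length + 1),
              f (b :: List.take j q) * (Multiset.map g (stuffle (a :: p) (List.drop j q))).sum := by
      simp only [List.length_cons]
      rw [Finset.sum_range_succ']
      simp only [List.take_succ_cons, List.drop_succ_cons, List.take_zero, List.drop_zero,
        stuffle_nil_left, Multiset.map_singleton, Multiset.sum_singleton]
    have hG : f [] * (Multiset.map (fun x => g (a :: x)) (stuffle p (b :: q))).sum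
        + f [] * (Multiset.map (fun x => g (b :: x)) (stuffle (a :: p) q)).sum
        + f [] * (Multiset.map (fun x => g ((a + b) :: x)) (stuffle p q)).sum
        = f [] * (Multiset.map g (stuffle (a :: p) (b :: q))).sum := by
      rw [stuffle_cons a b p q]
      simp only [Multiset.map_add, Multiset.sum_add, Multiset.map_map, Function.comp]
      ring
    have hA : ∀ i ∈ Finset.range (p.length + 1),
        (∑ j ∈ Finset.range (q.length + 1 + 1),
          (Multiset.map f (stuffle (a :: List.take i p) (List.take j (b :: q)))).sum *
            (Multiset.map g (stuffle (List.drop i p) (List.drop j (b :: q)))).sum)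
        = ((∑ j ∈ Finset.range (q.length + 1),
              (Multiset.map (fun t => f (a :: t)) (stuffle (List.take i p) (b :: List.take j q))).sum *
                (Multiset.map g (stuffle (List.drop i p) (List.drop j q))).sum)
          + (∑ j ∈ Finset.range (q.length + 1),
              (Multiset.map (fun t => f (b :: t)) (stuffle (a :: List.take i p) (List.take j q))).sum *
                (Multiset.map g (stuffle (List.drop i p) (List.drop j q))).sum)
          + (∑ j ∈ Finset.range (q.length + 1),
              (Multiset.map (fun t => f ((a + b) :: t)) (stuffle (List.take i p) (List.take j q))).sum *
                (Multiset.map g (stuffle (List.drop i p) (List.drop j q))).sum))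
          + f (a :: List.take i p) * (Multiset.map g (stuffle (List.drop i p) (b :: q))).sum := by
      intro i _
      rw [Finset.sum_range_succ']
      simp only [List.take_succ_cons, List.drop_succ_cons, List.take_zero, List.drop_zero,
        stuffle_nil_right, Multiset.map_singleton, Multiset.sum_singleton]
      congr 1
      have hj : ∀ j ∈ Finset.range (q.length + 1),
          (Multiset.map f (stuffle (a :: List.take i p) (b :: List.take j q))).sum *
            (Multiset.map g (stuffle (List.drop i p) (List.drop j q))).sum
          = (Multiset.map (fun t => f (a :: t)) (stuffle (List.take i p) (b :: List.take j q))).sum *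
                (Multiset.map g (stuffle (List.drop i p) (List.drop j q))).sum
            + (Multiset.map (fun t => f (b :: t)) (stuffle (a :: List.take i p) (List.take j q))).sum *
                (Multiset.map g (stuffle (List.drop i p) (List.drop j q))).sum
            + (Multiset.map (fun t => f ((a + b) :: t)) (stuffle (List.take i p) (List.take j q))).sum *
                (Multiset.map g (stuffle (List.drop i p) (List.drop j q))).sum := by
        intro j _
        rw [stuffle_cons]
        simp only [Multiset.map_add, Multiset.sum_add, Multiset.map_map, Function.comp]
        ring
      rw [Finset.sum_congr rfl hj, Finset.sum_add_distrib, Finset.sum_add_distrib]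
    have hB : (∑ j ∈ Finset.range (q.length + 1 + 1),
          (Multiset.map f (stuffle ([] : List ℕ+) (List.take j (b :: q)))).sum *
            (Multiset.map g (stuffle (a :: p) (List.drop j (b :: q)))).sum)
        = (∑ j ∈ Finset.range (q.length + 1),
            f (b :: List.take j q) * (Multiset.map g (stuffle (a :: p) (List.drop j q))).sum)
          + f [] * (Multiset.map g (stuffle (a :: p) (b :: q))).sum := by
      rw [Finset.sum_range_succ']
      simp only [List.take_succ_cons, List.drop_succ_cons, List.take_zero, List.drop_zero,
        stuffle_nil_left, Multiset.map_singleton, Multiset.sum_singleton]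
    have hRHS : (∑ i ∈ Finset.range ((a :: p).length + 1),
          ∑ j ∈ Finset.range ((b :: q).length + 1),
            (Multiset.map f (stuffle (List.take i (a :: p)) (List.take j (b :: q)))).sum *
              (Multiset.map g (stuffle (List.drop i (a :: p)) (List.drop j (b :: q)))).sum)
        = ((∑ i ∈ Finset.range (p.length + 1), ∑ j ∈ Finset.range (q.length + 1),
              (Multiset.map (fun t => f (a :: t)) (stuffle (List.take i p) (b :: List.take j q))).sum *
                (Multiset.map g (stuffle (List.drop i p) (List.drop j q))).sum)
          + (∑ i ∈ Finset.range (p.length + 1), ∑ j ∈ Finset.range (q.length + 1),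
              (Multiset.map (fun t => f (b :: t)) (stuffle (a :: List.take i p) (List.take j q))).sum *
                (Multiset.map g (stuffle (List.drop i p) (List.drop j q))).sum)
          + (∑ i ∈ Finset.range (p.length + 1), ∑ j ∈ Finset.range (q.length + 1),
              (Multiset.map (fun t => f ((a + b) :: t)) (stuffle (List.take i p) (List.take j q))).sum *
                (Multiset.map g (stuffle (List.drop i p) (List.drop j q))).sum))
          + (∑ i ∈ Finset.range (p.length + 1),
              f (a :: List.take i p) * (Multiset.map g (stuffle (List.drop i p) (b :: q))).sum)
          + ((∑ j ∈ Finset.range (q.length + 1),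
              f (b :: List.take j q) * (Multiset.map g (stuffle (a :: p) (List.drop j q))).sum)
            + f [] * (Multiset.map g (stuffle (a :: p) (b :: q))).sum) := by
      simp only [List.length_cons]
      rw [Finset.sum_range_succ'
        (fun i => ∑ j ∈ Finset.range (q.length + 1 + 1),
          (Multiset.map f (stuffle (List.take i (a :: p)) (List.take j (b :: q)))).sum *
            (Multiset.map g (stuffle (List.drop i (a :: p)) (List.drop j (b :: q)))).sum) (p.length + 1)]
      simp only [List.take_succ_cons, List.drop_succ_cons, List.take_zero, List.drop_zero]
      rw [Finset.sum_congr rfl hA, hB, Finset.sum_add_distrib, Finset.sum_add_distrib,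
        Finset.sum_add_distrib]
    rw [hS1, hS2, hRHS, ← hG]
    ring

theorem sym_unique {A : Type*} [CommRing A] [Algebra ℚ A]
    (U V : List ℕ+ → A)
    (hUsym : ∀ p q, U p * U q = ((stuffle p q).map U).sum)
    (hVsym : ∀ p q, V p * V q = ((stuffle p q).map V).sum)
    (hadm : ∀ l, Adm l → U l = V l)
    (h1 : U [1] = V [1]) (hUe : U [] = 1) (hVe : V [] = 1) :
    ∀ w, U w = V w := by
  suffices H : ∀ n w, leadOnes w ≤ n → U w = V w by
    intro w; exact H (leadOnes w) w le_rfl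
  intro n
  induction n with
  | zero =>
    intro w hw
    match w with
    | [] => rw [hUe, hVe]
    | a :: u =>
      apply hadm
      intro x hx
      simp only [List.head?, Option.mem_def, Option.some.injEq] at hx
      subst hx
      have ha : a ≠ 1 := by
        intro h
        rw [leadOnes_cons, if_pos h] at hw
        omega
      have h1 : (1:ℕ) < (a:ℕ) := by
        have := a.pos
        have : (a:ℕ) ≠ 1 := fun h => ha (PNat.coe_injective (by rw [h]; rfl))
        omega
      exact (by exact_mod_cast h1 : (1:ℕ+) < a)
  | succ n ih =>
    intro w hw
    match w with
    | [] => rw [hUe, hVe]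
    | a :: u =>
      by_cases ha : a = 1
      · subst ha
        have hu : leadOnes u ≤ n := by
          rw [leadOnes_cons, if_pos rfl] at hw; omega
        classical
        set S := stuffle [1] u with hS
        set w := (1:ℕ+) :: u with hwdef
        have hsplit : S = Multiset.replicate (leadOnes u + 1) w + S.filter (· ≠ w) := by
          conv_lhs => rw [← Multiset.filter_add_not (· = w) S]
          congr 1
          rw [Multiset.filter_eq', count_stuffle_one]
        have hrest : ((S.filter (· ≠ w)).map U).sum = ((S.filter (· ≠ w)).map V).sum := by
          congr 1
          apply Multiset.map_congr rfl
          intro x hx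
          have hx1 := Multiset.mem_filter.mp hx
          rcases stuffle_one_leadOnes u x hx1.1 with rfl | hle
          · exact absurd rfl hx1.2
          · exact ih x (le_trans hle hu)
        have hU := hUsym [1] u
        have hV := hVsym [1] u
        rw [← hS] at hU hV
        rw [hsplit] at hU hV
        simp only [Multiset.map_add, Multiset.sum_add, Multiset.map_replicate,
          Multiset.sum_replicate] at hU hV
        rw [hrest] at hU
        rw [h1, ih u hu] at hU
        rw [hV] at hU
        have hUV : (leadOnes u + 1) • U w = (leadOnes u + 1) • V w := by
          exact (add_right_cancel hU).symm
        have hc : ((leadOnes u + 1 : ℕ) : ℚ) ≠ 0 := by positivity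
        calc U w = ((leadOnes u + 1 : ℕ) : ℚ)⁻¹ • (((leadOnes u + 1 : ℕ) : ℚ) • U w) := by
              rw [inv_smul_smul₀ hc]
          _ = ((leadOnes u + 1 : ℕ) : ℚ)⁻¹ • (((leadOnes u + 1 : ℕ) : ℚ) • V w) := by
              rw [Nat.cast_smul_eq_nsmul, Nat.cast_smul_eq_nsmul, hUV]
          _ = V w := by rw [inv_smul_smul₀ hc]
      · apply hadm
        intro x hx
        simp only [List.head?, Option.mem_def, Option.some.injEq] at hx
        subst hx
        have h1 : (1:ℕ) < (a:ℕ) := by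
          have := a.pos
          have : (a:ℕ) ≠ 1 := fun h => ha (PNat.coe_injective (by rw [h]; rfl))
          omega
        exact (by exact_mod_cast h1 : (1:ℕ+) < a)

/-- Comparison of two symmetrel extensions: `Se_{θ₁} = Ne_{θ₁-θ₂} × Se_{θ₂}`. -/
theorem symmetrel_extensions_compare {A : Type*} [CommRing A] [Algebra ℚ A]
    (Se T₁ T₂ : List ℕ+ → A) (θ₁ θ₂ : A)
    (hSe : ∀ p q : List ℕ+, Se p * Se q = ((stuffle p q).map Se).sum)
    (h₁adm : ∀ l, Adm l → T₁ l = Se l) (h₂adm : ∀ l, Adm l → T₂ l = Se l)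
    (h₁sym : ∀ p q : List ℕ+, T₁ p * T₁ q = ((stuffle p q).map T₁).sum)
    (h₂sym : ∀ p q : List ℕ+, T₂ p * T₂ q = ((stuffle p q).map T₂).sum)
    (h₁one : T₁ [1] = θ₁) (h₂one : T₂ [1] = θ₂)
    (h₁empty : T₁ [] = 1) (h₂empty : T₂ [] = 1) :
    ∀ w : List ℕ+,
      T₁ w = ∑ k ∈ Finset.range (w.length + 1),
        NeMould (θ₁ - θ₂) (w.take k) * T₂ (w.drop k) := by
  set γ := θ₁ - θ₂ with hγ
  have Ne_nil : NeMould γ ([] : List ℕ+) = 1 := by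
    rw [Ne_allOnes γ (by simp)]
    simp [Nat.factorial]
  have Ne_one : NeMould γ [(1:ℕ+)] = γ := by
    rw [Ne_allOnes γ (by simp)]
    simp [Nat.factorial]
  have hMsym : ∀ p q : List ℕ+,
      (∑ k ∈ Finset.range (p.length + 1), NeMould γ (List.take k p) * T₂ (List.drop k p)) *
      (∑ k ∈ Finset.range (q.length + 1), NeMould γ (List.take k q) * T₂ (List.drop k q))
      = ((stuffle p q).map
          (fun w => ∑ k ∈ Finset.range (w.length + 1),
            NeMould γ (List.take k w) * T₂ (List.drop k w))).sum := by
    intro p q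
    rw [split_stuffle p q (NeMould γ) T₂, Finset.sum_mul_sum]
    apply Finset.sum_congr rfl
    intro i _
    apply Finset.sum_congr rfl
    intro j _
    rw [← Ne_symmetrel, ← h₂sym, mul_mul_mul_comm]
  have hVe : (∑ k ∈ Finset.range (([] : List ℕ+).length + 1),
      NeMould γ (List.take k ([] : List ℕ+)) * T₂ (List.drop k ([] : List ℕ+))) = 1 := by
    simp [Ne_nil, h₂empty]
  have hadm : ∀ l, Adm l → T₁ l =
      ∑ k ∈ Finset.range (l.length + 1), NeMould γ (List.take k l) * T₂ (List.drop k l) := by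
    intro l hl
    cases l with
    | nil => rw [h₁empty, hVe]
    | cons a u =>
      have ha : (2:ℕ+) ≤ a := hl a rfl
      have ha1 : a ≠ 1 := by
        intro h
        subst h
        exact absurd ha (by decide)
      rw [h₁adm _ hl, ← h₂adm _ hl]
      simp only [List.length_cons]
      rw [Finset.sum_range_succ']
      simp only [List.take_succ_cons, List.drop_succ_cons, List.take_zero, List.drop_zero]
      have hNe0 : ∀ k : ℕ, NeMould γ (a :: List.take k u) = 0 := by
        intro k
        apply Ne_not_allOnes
        intro h
        exact ha1 (h a (by simp))
      simp [hNe0, Ne_nil]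
  have h1 : T₁ [1] = ∑ k ∈ Finset.range (([(1:ℕ+)]).length + 1),
      NeMould γ (List.take k [(1:ℕ+)]) * T₂ (List.drop k [(1:ℕ+)]) := by
    rw [h₁one]
    rw [show ([(1:ℕ+)]).length + 1 = 2 from rfl]
    rw [Finset.sum_range_succ, Finset.sum_range_one]
    simp only [List.take_zero, List.drop_zero, List.take_succ_cons, List.drop_succ_cons,
      List.take_nil, List.drop_nil]
    rw [Ne_nil, Ne_one, h₂one, h₂empty, hγ]
    ring
  exact sym_unique T₁
    (fun w => ∑ k ∈ Finset.range (w.length + 1), NeMould γ (List.take k w) * T₂ (List.drop k w))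
    h₁sym hMsym hadm h1 h₁empty hVe
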